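/- For every equivariant n-cochain f on (A,H), one has A(b'f) = b(A f), where on the left-hand side A denotes the cyclic antisymmetrizer on (n+1)-cochains and on the right-hand side the cyclic antisymmetrizer on n-cochains; that is, A ∘ b' = b ∘ A on equivariant cochains. -/

import Mathlib

open scoped BigOperators

namespace EquivCyclic

noncomputable section

/-- An `n`-cochain on `(A, H)`: an `(n+1)`-ary map from `A` to the space of
complex-valued functions on `H`.  Multilinearity is imposed separately. -/
abbrev Cochain (A H : Type*) (n : ℕ) : Type _ := (Fin (n + 1) → A) → H → ℂ

variable {A H : Type*} [Ring A] [Algebra ℂ A] [Group H]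

/-- `f` is `(n+1)`-linear over `ℂ`. -/
def IsMultilinear (n : ℕ) (f : Cochain A H n) : Prop :=
  ∀ (a : Fin (n + 1) → A) (i : Fin (n + 1)) (h : H),
    (∀ x y : A,
      f (Function.update a i (x + y)) h =
        f (Function.update a i x) h + f (Function.update a i y) h) ∧
    (∀ (c : ℂ) (x : A),
      f (Function.update a i (c • x)) h = c * f (Function.update a i x) h)

/-- `act` is an action of the group `H` on `A` by (complex) algebra
automorphisms. -/
def IsAlgAction (act : H → A → A) : Prop :=
  (∀ x : A, act 1 x = x) ∧
  (∀ (g h : H) (x : A), act (g * h) x = act g (act h x)) ∧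
  (∀ (h : H) (x y : A), act h (x + y) = act h x + act h y) ∧
  (∀ (h : H) (x y : A), act h (x * y) = act h x * act h y) ∧
  (∀ (h : H) (c : ℂ) (x : A), act h (c • x) = c • act h x)

/-- Equivariance of a cochain:
`f(h·a⁰, …, h·aⁿ)(h g h⁻¹) = f(a⁰, …, aⁿ)(g)`. -/
def IsEquivariant (act : H → A → A) (n : ℕ) (f : Cochain A H n) : Prop :=
  ∀ (g h : H) (a : Fin (n + 1) → A),
    f (fun i => act h (a i)) (h * g * h⁻¹) = f a g

/-- An equivariant `n`-cochain on `(A, H)`: an `(n+1)`-linear map satisfying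
the equivariance condition. -/
def IsEquivCochain (act : H → A → A) (n : ℕ) (f : Cochain A H n) : Prop :=
  IsMultilinear n f ∧ IsEquivariant act n f

/-- The operator `b'`:
`(b'f)(a⁰,…,aⁿ⁺¹|h) = Σ_{j=0}^{n} (−1)^j f(a⁰,…,aʲaʲ⁺¹,…,aⁿ⁺¹|h)`. -/
def bPrime (n : ℕ) (f : Cochain A H n) : Cochain A H (n + 1) :=
  fun a h =>
    ∑ j : Fin (n + 1),
      (-1 : ℂ) ^ (j : ℕ) *
        f (fun i =>
            if (i : ℕ) < (j : ℕ) then a i.castSucc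
            else if (i : ℕ) = (j : ℕ) then a i.castSucc * a i.succ
            else a i.succ) h

/-- The equivariant Hochschild differential `b`:
`(bf)(a⁰,…,aⁿ⁺¹|h) = (b'f)(a⁰,…,aⁿ⁺¹|h) + (−1)^{n+1} f((h⁻¹·aⁿ⁺¹)a⁰, a¹,…,aⁿ|h)`. -/
def bOp (act : H → A → A) (n : ℕ) (f : Cochain A H n) : Cochain A H (n + 1) :=
  fun a h =>
    bPrime n f a h +
      (-1 : ℂ) ^ (n + 1) *
        f (fun i =>
            if (i : ℕ) = 0 then act h⁻¹ (a (Fin.last (n + 1))) * a 0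
            else a i.castSucc) h

/-- The equivariant cyclic permutation `λ_H^*`:
`(λ_H^* f)(a⁰,…,aⁿ|h) = f(h⁻¹·aⁿ, a⁰,…,aⁿ⁻¹|h)`. -/
def lamOp (act : H → A → A) (n : ℕ) (f : Cochain A H n) : Cochain A H n :=
  fun a h =>
    f (fun i =>
        if (i : ℕ) = 0 then act h⁻¹ (a (Fin.last n))
        else a ⟨(i : ℕ) - 1, lt_of_le_of_lt (Nat.sub_le _ _) i.isLt⟩) h

/-- The cyclic antisymmetrizer `A f = Σ_{j=0}^{n} (−1)^{nj} (λ_H^*)^j f`. -/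
def antisymOp (act : H → A → A) (n : ℕ) (f : Cochain A H n) : Cochain A H n :=
  fun a h =>
    ∑ j : Fin (n + 1), (-1 : ℂ) ^ (n * (j : ℕ)) * ((lamOp act n)^[(j : ℕ)] f) a h

/-- A cochain is cyclic if `λ_H^* f = (−1)^n f`. -/
def IsCyclic (act : H → A → A) (n : ℕ) (f : Cochain A H n) : Prop :=
  lamOp act n f = ((-1 : ℂ) ^ n) • f

/-- The cochain `f_a(a⁰,…,aⁿ⁻¹|h) = f(a⁰,…,aⁿ⁻¹,a|h)`. -/
def contract (n : ℕ) (f : Cochain A H (n + 1)) (a : A) : Cochain A H n :=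
  fun v h => f (fun i => if hi : (i : ℕ) < n + 1 then v ⟨(i : ℕ), hi⟩ else a) h

/-- `(δ_a^* f)(a⁰,…,aⁿ|h) = Σ_{i=0}^{n} f(a⁰,…, a aⁱ − aⁱ a, …, aⁿ|h)`. -/
def deltaStar (n : ℕ) (a : A) (f : Cochain A H n) : Cochain A H n :=
  fun v h => ∑ i : Fin (n + 1), f (Function.update v i (a * v i - v i * a)) h

/-- The exponential `exp(a) = Σ_k a^k/k!` of a nilpotent element with
`a ^ N = 0`; the sum is finite. -/
def expNil (a : A) (N : ℕ) : A :=
  ∑ k ∈ Finset.range N, ((k.factorial : ℂ))⁻¹ • a ^ k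

variable {m : ℕ}

/-- The action of `H` on `A ⊗ End(ℂᵐ)`, realized as `m × m` matrices over `A`:
`h · M = U(h) (h·M) U(h)⁻¹`. -/
def matAct (act : H → A → A) (U : H →* Matrix.unitaryGroup (Fin m) ℂ) :
    H → Matrix (Fin m) (Fin m) A → Matrix (Fin m) (Fin m) A :=
  fun h M =>
    ((U h : Matrix (Fin m) (Fin m) ℂ).map fun c => algebraMap ℂ A c) *
      (M.map (act h)) *
      ((U h⁻¹ : Matrix (Fin m) (Fin m) ℂ).map fun c => algebraMap ℂ A c)

/-- The cochain `f ♯ tr` on `A ⊗ End(ℂᵐ)`, realized as matrices over `A`: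
on elementary tensors it is `f(a⁰,…,aⁿ|h) · tr(T⁰ ⋯ Tⁿ U(h))`. -/
def sharpTr (n : ℕ) (f : Cochain A H n) (U : H →* Matrix.unitaryGroup (Fin m) ℂ) :
    Cochain (Matrix (Fin m) (Fin m) A) H n :=
  fun M h =>
    ∑ idx : Fin (n + 2) → Fin m,
      f (fun j => M j (idx j.castSucc) (idx j.succ)) h *
        (U h : Matrix (Fin m) (Fin m) ℂ) (idx (Fin.last (n + 1))) (idx 0)


/-! ### Auxiliary development for STATEMENT 4 -/

section Stmt4Aux

variable (act : H → A → A)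

/-- The `j`-th face operator (for `j ≤ n` the multiplication face, for
`j = n+1` the twisted face appearing in `b`). -/
def face (n j : ℕ) (f : Cochain A H n) : Cochain A H (n + 1) :=
  fun a h =>
    if j ≤ n then
      f (fun i =>
          if (i : ℕ) < j then a i.castSucc
          else if (i : ℕ) = j then a i.castSucc * a i.succ
          else a i.succ) h
    else
      f (fun i =>
          if (i : ℕ) = 0 then act h⁻¹ (a (Fin.last (n + 1))) * a 0
          else a i.castSucc) h

lemma apply_congr {N : ℕ} (a : Fin N → A) {i j : Fin N} (h : (i : ℕ) = (j : ℕ)) :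
    a i = a j := by
  congr 1; exact Fin.ext h

lemma neg_one_pow_congr {x y : ℕ} (h : x % 2 = y % 2) : (-1 : ℂ) ^ x = (-1 : ℂ) ^ y := by
  rw [← Nat.div_add_mod x 2, ← Nat.div_add_mod y 2, h, pow_add, pow_add, pow_mul, pow_mul]
  norm_num

lemma lam_face_zero (n : ℕ) (f : Cochain A H n) :
    lamOp act (n + 1) (face act n 0 f) = face act n (n + 1) f := by
  funext a h
  simp only [lamOp, face, Nat.zero_le, if_true, if_neg (Nat.not_succ_le_self n)]
  congr 1
  funext i
  by_cases h0 : (i : ℕ) = 0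
  · simp only [h0, Fin.coe_castSucc, Fin.val_succ, Nat.lt_irrefl, if_false, if_true,
      Nat.add_eq_zero, Nat.one_ne_zero, and_false]
    exact congrArg _ (apply_congr a (by simp))
  · simp only [h0, Fin.coe_castSucc, Fin.val_succ, Nat.not_lt_zero, if_false,
      Nat.add_eq_zero, Nat.one_ne_zero, and_false]
    exact apply_congr a (by simp)

lemma lam_face_succ (hact : IsAlgAction act) (n j : ℕ) (hj : j ≤ n) (f : Cochain A H n) :
    lamOp act (n + 1) (face act n (j + 1) f) = face act n j (lamOp act n f) := by
  have hmul := hact.2.2.2.1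
  funext a h
  by_cases hjn : j + 1 ≤ n
  · simp only [lamOp, face, if_pos hjn, if_pos hj]
    congr 1
    funext i
    simp only [Fin.coe_castSucc, Fin.val_succ, Fin.val_last, Fin.val_mk, Fin.val_zero]
    split_ifs <;> try (exfalso; first | assumption | omega)
    all_goals first
      | rfl
      | exact apply_congr a (by first | (simp; omega) | simp | omega)
      | exact congrArg _ (apply_congr a (by first | (simp; omega) | simp | omega))
      | exact congrArg₂ (· * ·) (apply_congr a (by first | (simp; omega) | simp | omega)) (apply_congr a (by first | (simp; omega) | simp | omega))
      | (rw [hmul]; exact congrArg₂ (· * ·) (apply_congr a (by first | (simp; omega) | simp | omega)) (apply_congr a (by first | (simp; omega) | simp | omega)))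
      | (rw [hmul]; congr 1 <;> exact congrArg _ (apply_congr a (by first | (simp; omega) | simp | omega)))
  · have hjeq : j = n := by omega
    subst hjeq
    simp only [lamOp, face, if_neg hjn, if_pos le_rfl]
    congr 1
    funext i
    simp only [Fin.coe_castSucc, Fin.val_succ, Fin.val_last, Fin.val_mk, Fin.val_zero]
    split_ifs <;> try (exfalso; first | assumption | omega)
    all_goals first
      | rfl
      | exact apply_congr a (by first | (simp; omega) | simp | omega)
      | exact congrArg _ (apply_congr a (by first | (simp; omega) | simp | omega))
      | exact congrArg₂ (· * ·) (apply_congr a (by first | (simp; omega) | simp | omega)) (apply_congr a (by first | (simp; omega) | simp | omega))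
      | (rw [hmul]; exact congrArg₂ (· * ·) (apply_congr a (by first | (simp; omega) | simp | omega)) (apply_congr a (by first | (simp; omega) | simp | omega)))
      | (rw [hmul]; congr 1 <;> exact congrArg _ (apply_congr a (by first | (simp; omega) | simp | omega)))

lemma iter_lam_of_le (hact : IsAlgAction act) (n : ℕ) :
    ∀ (k j : ℕ), k ≤ j → j ≤ n + 1 → ∀ f : Cochain A H n,
      (lamOp act (n + 1))^[k] (face act n j f) =
        face act n (j - k) ((lamOp act n)^[k] f) := by
  intro k
  induction k with
  | zero => intro j _ _ f; simp
  | succ k ih =>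
      intro j hkj hjn f
      obtain ⟨j, rfl⟩ : ∃ j', j = j' + 1 := ⟨j - 1, by omega⟩
      rw [Function.iterate_succ_apply, lam_face_succ act hact n j (by omega) f,
        ih j (by omega) (by omega) (lamOp act n f), ← Function.iterate_succ_apply]
      have hidx : j + 1 - (k + 1) = j - k := by omega
      rw [hidx]

lemma iter_lam_of_gt (hact : IsAlgAction act) (n : ℕ) (k j : ℕ) (hjk : j < k)
    (hk : k ≤ n + 1) (hj : j ≤ n) (f : Cochain A H n) :
    (lamOp act (n + 1))^[k] (face act n j f) =
      face act n (n + 2 + j - k) ((lamOp act n)^[k - 1] f) := by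
  obtain ⟨m, rfl⟩ : ∃ m, k = m + (1 + j) := ⟨k - j - 1, by omega⟩
  rw [Function.iterate_add_apply, Function.iterate_add_apply,
    iter_lam_of_le act hact n j j le_rfl (by omega) f, Nat.sub_self,
    Function.iterate_one, lam_face_zero,
    iter_lam_of_le act hact n m (n + 1) (by omega) le_rfl]
  rw [← Function.iterate_add_apply]
  have h1 : n + 2 + j - (m + (1 + j)) = n + 1 - m := by omega
  have h2 : m + (1 + j) - 1 = m + j := by omega
  rw [h1, h2]

lemma iter_lam_sum (N : ℕ) (s : Finset ℕ) (c : ℕ → ℂ) :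
    ∀ (k : ℕ) (F : ℕ → Cochain A H N),
      (lamOp act N)^[k] (fun a h => ∑ j ∈ s, c j * F j a h) =
        fun a h => ∑ j ∈ s, c j * ((lamOp act N)^[k] (F j)) a h := by
  intro k
  induction k with
  | zero => intro F; rfl
  | succ k ih =>
      intro F
      rw [Function.iterate_succ_apply,
        show lamOp act N (fun a h => ∑ j ∈ s, c j * F j a h)
            = fun a h => ∑ j ∈ s, c j * (lamOp act N (F j)) a h from rfl,
        ih]
      simp only [← Function.iterate_succ_apply]

lemma bPrime_eq (n : ℕ) (f : Cochain A H n) :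
    bPrime n f = fun a h => ∑ j ∈ Finset.range (n + 1),
      (-1 : ℂ) ^ j * face act n j f a h := by
  funext a h
  rw [bPrime, ← Fin.sum_univ_eq_sum_range
    (fun j => (-1 : ℂ) ^ j * face act n j f a h) (n + 1)]
  refine Finset.sum_congr rfl fun j _ => ?_
  rw [face, if_pos (Nat.lt_succ_iff.mp j.isLt)]

lemma bOp_eq (n : ℕ) (f : Cochain A H n) :
    bOp act n f = fun a h => ∑ j ∈ Finset.range (n + 2),
      (-1 : ℂ) ^ j * face act n j f a h := by
  funext a h
  rw [Finset.sum_range_succ, bOp, bPrime_eq act n f]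
  congr 1
  rw [face, if_neg (by omega)]

lemma face_sum (n i : ℕ) (s : Finset ℕ) (c : ℕ → ℂ) (F : ℕ → Cochain A H n)
    (a : Fin (n + 2) → A) (h : H) :
    face act n i (fun a h => ∑ m ∈ s, c m * F m a h) a h =
      ∑ m ∈ s, c m * face act n i (F m) a h := by
  by_cases hi : i ≤ n <;> simp [face, hi]

end Stmt4Aux

/-- `A ∘ b' = b ∘ A` on equivariant cochains. -/
theorem stmt4 {A H : Type*} [Ring A] [Algebra ℂ A] [Group H]
    (act : H → A → A) (hact : IsAlgAction act)
    (n : ℕ) (f : Cochain A H n) (hf : IsEquivCochain act n f) :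
    antisymOp act (n + 1) (bPrime n f) = bOp act n (antisymOp act n f) := by
  have ant_eq : antisymOp act n f =
      fun a h => ∑ m ∈ Finset.range (n + 1),
        (-1 : ℂ) ^ (n * m) * ((lamOp act n)^[m] f) a h := by
    funext a h
    rw [antisymOp]
    exact Fin.sum_univ_eq_sum_range
      (fun m => (-1 : ℂ) ^ (n * m) * ((lamOp act n)^[m] f) a h) (n + 1)
  have L : ∀ k : ℕ, (lamOp act (n + 1))^[k] (bPrime n f) =
      fun a h => ∑ j ∈ Finset.range (n + 1),
        (-1 : ℂ) ^ j * ((lamOp act (n + 1))^[k] (face act n j f)) a h := by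
    intro k
    rw [bPrime_eq act n f]
    exact iter_lam_sum act (n + 1) (Finset.range (n + 1)) (fun j => (-1 : ℂ) ^ j) k
      (fun j => face act n j f)
  funext a h
  rw [bOp_eq, ant_eq]
  have RHS_eq : ∀ i : ℕ,
      face act n i (fun a h => ∑ m ∈ Finset.range (n + 1),
        (-1 : ℂ) ^ (n * m) * ((lamOp act n)^[m] f) a h) a h =
      ∑ m ∈ Finset.range (n + 1),
        (-1 : ℂ) ^ (n * m) * face act n i ((lamOp act n)^[m] f) a h :=
    fun i => face_sum act n i (Finset.range (n + 1)) (fun m => (-1 : ℂ) ^ (n * m))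
      (fun m => (lamOp act n)^[m] f) a h
  simp only [RHS_eq]
  rw [antisymOp]
  simp only [L]
  rw [Fin.sum_univ_eq_sum_range
    (fun k => (-1 : ℂ) ^ ((n + 1) * k) * ∑ j ∈ Finset.range (n + 1),
      (-1 : ℂ) ^ j * ((lamOp act (n + 1))^[k] (face act n j f)) a h) (n + 2)]
  simp only [Finset.mul_sum]
  rw [← Finset.sum_product' (Finset.range (n + 2)) (Finset.range (n + 1))
    (fun k j => (-1 : ℂ) ^ ((n + 1) * k) *
      ((-1 : ℂ) ^ j * ((lamOp act (n + 1))^[k] (face act n j f)) a h)),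
    ← Finset.sum_product' (Finset.range (n + 2)) (Finset.range (n + 1))
    (fun i m => (-1 : ℂ) ^ i *
      ((-1 : ℂ) ^ (n * m) * face act n i ((lamOp act n)^[m] f) a h))]
  refine Finset.sum_nbij'
    (fun p => if p.1 ≤ p.2 then (p.2 - p.1, p.1) else (n + 2 + p.2 - p.1, p.1 - 1))
    (fun q => if q.1 + q.2 ≤ n then (q.2, q.1 + q.2) else (q.2 + 1, q.1 + q.2 - (n + 1)))
    ?_ ?_ ?_ ?_ ?_
  · intro p hp
    simp only [Finset.mem_product, Finset.mem_range] at hp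
    split_ifs <;> simp only [Finset.mem_product, Finset.mem_range] <;>
      constructor <;> omega
  · intro q hq
    simp only [Finset.mem_product, Finset.mem_range] at hq
    split_ifs <;> simp only [Finset.mem_product, Finset.mem_range] <;>
      constructor <;> omega
  · intro p hp
    simp only [Finset.mem_product, Finset.mem_range] at hp
    split_ifs <;> simp_all [Prod.ext_iff] <;> omega
  · intro q hq
    simp only [Finset.mem_product, Finset.mem_range] at hq
    split_ifs <;> simp_all [Prod.ext_iff] <;> omega
  · rintro ⟨k, j⟩ hp
    dsimp only
    simp only [Finset.mem_product, Finset.mem_range] at hp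
    by_cases hkj : k ≤ j
    · rw [if_pos hkj]
      dsimp only
      rw [iter_lam_of_le act hact n k j hkj (by omega) f]
      rw [← mul_assoc, ← mul_assoc, ← pow_add, ← pow_add]
      have h1 : (n + 1) * k = n * k + k := by ring
      exact congrArg₂ (· * ·) (neg_one_pow_congr (by omega)) rfl
    · obtain ⟨k', rfl⟩ : ∃ k', k = k' + 1 := ⟨k - 1, by omega⟩
      rw [if_neg hkj]
      dsimp only
      simp only [Nat.add_sub_cancel]
      rw [iter_lam_of_gt act hact n (k' + 1) j (by omega) (by omega) (by omega) f]
      simp only [Nat.add_sub_cancel]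
      rw [← mul_assoc, ← mul_assoc, ← pow_add, ← pow_add]
      have h1 : (n + 1) * (k' + 1) = n * k' + n + k' + 1 := by ring
      exact congrArg₂ (· * ·) (neg_one_pow_congr (by omega)) rfl

end

end EquivCyclic
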